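/- Completing the graph late preserves separators: let G = (V, E, τ) be a temporal graph with distinct s, z ∈ V and no time-edge between s and z, and construct G' = (V, E', τ+2) as follows: E' contains (e, t+1) for every (e,t) ∈ E; additionally ({v,w}, 1) for every pair v ≠ w with v,w ∈ V \ {s} and {v,w} not an edge of the underlying graph of G; and ({s,v}, τ+2) for every v ∈ V \ {z} with {s,v} not an edge of the underlying graph of G. Then a set S ⊆ V \ {s,z} is a temporal (s,z)-separator in G if and only if it is one in G'; moreover the underlying graph of G' is the complete graph on V minus the single edge {s,z}. -/

import Mathlib

/-- A temporal graph: a set of time-edges over vertex set `V`, with time labels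
in `{1, ..., tau}`. -/
structure TemporalGraph (V : Type*) where
  E : Sym2 V → ℕ → Prop
  tau : ℕ
  valid : ∀ e t, E e t → 1 ≤ t ∧ t ≤ tau

namespace TemporalGraph

variable {V : Type*}

/-- `G − S`: delete the vertices of `S` (i.e. all time-edges incident to `S`). -/
def del (G : TemporalGraph V) (S : Set V) : TemporalGraph V where
  E e t := G.E e t ∧ ∀ v ∈ e, v ∉ S
  tau := G.tau
  valid e t h := G.valid e t h.1

/-- `vs` (the visited vertices, in order) together with the time labels `ts`
form a temporal `(s,z)`-path: consecutive vertices are joined by time-edges,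
the labels are non-decreasing, and the visited vertices are pairwise distinct. -/
def IsTempPath (G : TemporalGraph V) (s z : V) (vs : List V) (ts : List ℕ) : Prop :=
  vs.length = ts.length + 1 ∧ vs.Nodup ∧ vs.head? = some s ∧ vs.getLast? = some z ∧
  List.Chain' (· ≤ ·) ts ∧
  ∀ (i : ℕ) (hts : i < ts.length) (hvs : i + 1 < vs.length),
    G.E s(vs.get ⟨i, Nat.lt_of_succ_lt hvs⟩, vs.get ⟨i + 1, hvs⟩) (ts.get ⟨i, hts⟩)

/-- `w` is reachable from `s` by a temporal path. -/
def Reach (G : TemporalGraph V) (s w : V) : Prop :=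
  ∃ vs ts, G.IsTempPath s w vs ts

/-- `w` is reachable from `s` by a temporal path with arrival time at most `t`. -/
def ReachBy (G : TemporalGraph V) (s w : V) (t : ℕ) : Prop :=
  ∃ vs ts, G.IsTempPath s w vs ts ∧ ∀ t' ∈ ts, t' ≤ t

/-- `S` is a temporal `(s,z)`-separator: no temporal `(s,z)`-path in `G − S`. -/
def IsSep (G : TemporalGraph V) (s z : V) (S : Set V) : Prop :=
  ¬ ∃ vs ts, (G.del S).IsTempPath s z vs ts

/-- The underlying static graph of a temporal graph. -/
def underlying (G : TemporalGraph V) : SimpleGraph V where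
  Adj v w := v ≠ w ∧ ∃ t, G.E s(v, w) t
  symm := ⟨fun v w ⟨hne, t, ht⟩ => ⟨hne.symm, t, by rw [Sym2.eq_swap]; exact ht⟩⟩
  loopless := ⟨fun v h => h.1 rfl⟩

/-- Concatenation `G₁ ∘ G₂`: the time labels of `G₂` are shifted by `G₁.tau`. -/
def concat (G₁ G₂ : TemporalGraph V) : TemporalGraph V where
  E e t := G₁.E e t ∨ (G₁.tau < t ∧ G₂.E e (t - G₁.tau))
  tau := G₁.tau + G₂.tau
  valid := by
    rintro e t (h | ⟨h1, h2⟩)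
    · have := G₁.valid e t h; omega
    · have := G₂.valid e (t - G₁.tau) h2; omega

/-- The temporal graph with no time-edges and maximum label 0. -/
def emptyTG (V : Type*) : TemporalGraph V where
  E _ _ := False
  tau := 0
  valid := by intro e t h; exact h.elim

/-- `pow G n` is the `n`-fold concatenation `G ∘ G ∘ ⋯ ∘ G`. -/
def pow (G : TemporalGraph V) : ℕ → TemporalGraph V
  | 0 => emptyTG V
  | n + 1 => (pow G n).concat G

/-- `G_{[a:b]}`: restriction to time-edges with labels in `[a, b]`. -/
def restrict (G : TemporalGraph V) (a b : ℕ) : TemporalGraph V where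
  E e t := G.E e t ∧ a ≤ t ∧ t ≤ b
  tau := min b G.tau
  valid := by rintro e t ⟨h, ha, hb⟩; have := G.valid e t h; omega

/-- `G` (on the vertices of `W`) is an order-preserving temporal unit interval
graph with respect to the linear order on `V`: every layer satisfies the
sandwich property characterizing unit interval graphs compatible with the
order (if `{u,x}` is an edge and `u < v < x`, then `{v,x}` and `{u,v}` are
edges of the same layer). -/
def OPUI [LinearOrder V] (G : TemporalGraph V) (W : Set V) : Prop :=
  ∀ t : ℕ, ∀ u ∈ W, ∀ v ∈ W, ∀ x ∈ W, u < v → v < x →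
    G.E s(u, x) t → G.E s(v, x) t ∧ G.E s(u, v) t

/-- The number of descents (strict decreases between consecutive entries) of a
list of labels; this equals the number of maximal monotonically non-decreasing
intervals minus one. -/
def descents : List ℕ → ℕ
  | [] => 0
  | [_] => 0
  | a :: b :: l => (if b < a then 1 else 0) + descents (b :: l)

end TemporalGraph

namespace TemporalGraph

/-- Complete the graph "late": shift all time-edges of `G` by one, add all
missing edges not incident to `s` at time 1, and all missing edges at `s`
(except `{s,z}`) at time `τ + 2`. -/
def completeLate {V : Type*} (G : TemporalGraph V) (s z : V) : TemporalGraph V where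
  E e t :=
    (∃ t₀, G.E e t₀ ∧ t = t₀ + 1) ∨
    (t = 1 ∧ ¬ e.IsDiag ∧ s ∉ e ∧ ∀ t₀, ¬ G.E e t₀) ∨
    (t = G.tau + 2 ∧ (∃ v, v ≠ z ∧ v ≠ s ∧ e = s(s, v)) ∧ ∀ t₀, ¬ G.E e t₀)
  tau := G.tau + 2
  valid := by
    rintro e t (⟨t₀, h, rfl⟩ | ⟨rfl, -⟩ | ⟨rfl, -⟩)
    · have := G.valid e t₀ h; omega
    · omega
    · omega

end TemporalGraph


namespace TemporalGraph

private lemma lift_path {V : Type*} {G : TemporalGraph V} {s z : V} {S : Set V}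
    {vs : List V} {ts : List ℕ}
    (h : (G.del S).IsTempPath s z vs ts) :
    ((completeLate G s z).del S).IsTempPath s z vs (ts.map (· + 1)) := by
  obtain ⟨hlen, hnd, hh, hl, hc, he⟩ := h
  refine ⟨by simpa using hlen, hnd, hh, hl, ?_, ?_⟩
  · rw [List.Chain', List.isChain_map]
    exact hc.imp (fun a b h => by omega)
  · intro i hts hvs
    simp only [List.length_map] at hts
    have h2 := he i hts hvs
    obtain ⟨hE, hS⟩ := h2
    simp only [List.get_eq_getElem, List.getElem_map] at *
    exact ⟨Or.inl ⟨ts[i], hE, rfl⟩, hS⟩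

private lemma drop_path {V : Type*} {G : TemporalGraph V} {s z : V} {S : Set V}
    (hsz : s ≠ z) {vs : List V} {ts : List ℕ}
    (h : ((completeLate G s z).del S).IsTempPath s z vs ts) :
    (G.del S).IsTempPath s z vs (ts.map (· - 1)) := by
  obtain ⟨hlen, hnd, hh, hl, hc, he⟩ := h
  have hvpos : 0 < vs.length := by omega
  have h0 : vs[0] = s := by
    rw [List.head?_eq_getElem?, List.getElem?_eq_getElem hvpos] at hh
    exact Option.some.inj hh
  have hlastv : vs[vs.length - 1]'(by omega) = z := by
    rw [List.getLast?_eq_getElem?, List.getElem?_eq_getElem (by omega)] at hl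
    exact Option.some.inj hl
  have htpos : 0 < ts.length := by
    by_contra hcon
    have h1 : vs.length - 1 = 0 := by omega
    simp only [h1] at hlastv
    exact hsz (h0 ▸ hlastv ▸ rfl)
  have hs_idx : ∀ i (hi : i < vs.length), vs[i] = s → i = 0 := by
    intro i hi hvi
    have : vs[i] = vs[0] := by rw [hvi, h0]
    exact (hnd.getElem_inj_iff).mp this
  have hmono : ∀ i j (hi : i < ts.length) (hj : j < ts.length), i ≤ j →
      ts[i] ≤ ts[j] := by
    intro i j hi hj hij
    rcases Nat.lt_or_ge i j with hlt | hge
    · exact List.pairwise_iff_getElem.mp (List.isChain_iff_pairwise.mp hc) i j hi hj hlt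
    · have : i = j := by omega
      subst this; exact le_refl _
  -- each edge is incident only to vertices of index ≥ 1 except edge 0
  have hnotthird : ∀ i (hts : i < ts.length) (hvs : i + 1 < vs.length),
      ¬ (ts[i] = G.tau + 2 ∧ (∃ v, v ≠ z ∧ v ≠ s ∧ s(vs[i], vs[i+1]) = s(s, v)) ∧
        ∀ t₀, ¬ G.E s(vs[i], vs[i+1]) t₀) := by
    rintro i hts hvs ⟨hti, ⟨v, hvz, hvns, heq⟩, -⟩
    rcases Sym2.eq_iff.mp heq with ⟨hi1, hi2⟩ | ⟨hi1, hi2⟩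
    · -- vs[i] = s, vs[i+1] = v
      have hi0 : i = 0 := hs_idx i (by omega) hi1
      subst hi0
      rcases Nat.lt_or_ge 1 ts.length with h1t | h1t
      · -- there is a second edge, time τ+2, impossible
        have hv2 : 1 + 1 < vs.length := by omega
        obtain ⟨hE1, -⟩ := he 1 h1t hv2
        have hub := ((completeLate G s z).del S).valid _ _ (he 1 h1t hv2)
        have hlb := hmono 0 1 hts h1t (by omega)
        simp only [List.get_eq_getElem] at hE1 hub hlb
        have ht1 : ts[1] = G.tau + 2 := by
          simp only [del, completeLate] at hub; omega
        rcases hE1 with ⟨t₀, hG, hE⟩ | ⟨hE, -⟩ | ⟨-, ⟨w, -, hwns, heqw⟩, -⟩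
        · have := G.valid _ _ hG; omega
        · omega
        · rcases Sym2.eq_iff.mp heqw with ⟨ha, -⟩ | ⟨-, hb⟩
          · exact absurd (hs_idx 1 (by omega) ha) (by omega)
          · exact absurd (hs_idx 2 (by omega) hb) (by omega)
      · -- the path is a single τ+2 edge, so vs[1] = z = v, contradiction
        have hts1 : ts.length = 1 := by omega
        have h1 : vs.length - 1 = 1 := by omega
        simp only [h1] at hlastv
        exact hvz (hi2 ▸ hlastv)
    · -- vs[i+1] = s, impossible
      exact absurd (hs_idx (i+1) (by omega) hi2) (by omega)
  have hkey : ∀ i (hts : i < ts.length) (hvs : i + 1 < vs.length),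
      ∃ t₀, (G.E s(vs[i], vs[i+1]) t₀ ∧ ts[i] = t₀ + 1) ∧
        ∀ v ∈ s(vs[i], vs[i+1]), v ∉ S := by
    have h0edge : ∃ t₀, G.E s(vs[0], vs[0+1]) t₀ ∧
        ts[0] = t₀ + 1 := by
      have hvs0 : 0 + 1 < vs.length := by omega
      obtain ⟨hE, -⟩ := he 0 htpos hvs0
      simp only [List.get_eq_getElem] at hE
      rcases hE with ⟨t₀, hG, hE⟩ | ⟨-, -, hns, -⟩ | h3
      · exact ⟨t₀, hG, hE⟩
      · exact absurd (Sym2.mem_iff.mpr (Or.inl h0.symm)) hns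
      · exact absurd h3 (hnotthird 0 htpos hvs0)
    have hts0 : 2 ≤ ts[0] := by
      obtain ⟨t₀, hG, hE⟩ := h0edge
      have := G.valid _ _ hG; omega
    intro i hts hvs
    obtain ⟨hE, hS⟩ := he i hts hvs
    simp only [List.get_eq_getElem] at hE hS
    rcases hE with ⟨t₀, hG, hE⟩ | ⟨h1, -⟩ | h3
    · exact ⟨t₀, ⟨hG, hE⟩, hS⟩
    · have := hmono 0 i htpos hts (by omega); omega
    · exact absurd h3 (hnotthird i hts hvs)
  refine ⟨by simpa using hlen, hnd, hh, hl, ?_, ?_⟩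
  · rw [List.Chain', List.isChain_map]
    exact hc.imp (fun a b h => by omega)
  · intro i hts hvs
    simp only [List.length_map] at hts
    obtain ⟨t₀, ⟨hG, hE⟩, hS⟩ := hkey i hts hvs
    simp only [List.get_eq_getElem, List.getElem_map]
    have : ts[i] - 1 = t₀ := by omega
    rw [this]
    exact ⟨hG, hS⟩

end TemporalGraph

open TemporalGraph in
/-- completing the graph late preserves temporal
`(s,z)`-separators, and the underlying graph of the result is the complete
graph minus the single edge `{s,z}`. -/
theorem completeLate_sep_iff {V : Type*} (G : TemporalGraph V) (s z : V)
    (hsz : s ≠ z) (hnoedge : ∀ t, ¬ G.E s(s, z) t)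
    (S : Set V) (hs : s ∉ S) (hz : z ∉ S) :
    (G.IsSep s z S ↔ (completeLate G s z).IsSep s z S) ∧
    (∀ v w : V, (completeLate G s z).underlying.Adj v w ↔
      (v ≠ w ∧ s(v, w) ≠ s(s, z))) := by
  constructor
  · constructor
    · intro hG hcontra
      obtain ⟨vs, ts, hp⟩ := hcontra
      exact hG ⟨vs, ts.map (· - 1), TemporalGraph.drop_path hsz hp⟩
    · intro hG' hcontra
      obtain ⟨vs, ts, hp⟩ := hcontra
      exact hG' ⟨vs, ts.map (· + 1), TemporalGraph.lift_path hp⟩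
  · intro v w
    constructor
    · rintro ⟨hvw, t, hE⟩
      refine ⟨hvw, ?_⟩
      rcases hE with ⟨t₀, hG, -⟩ | ⟨-, -, hs', -⟩ | ⟨-, ⟨u, huz, hus, heq⟩, -⟩
      · intro heq; rw [heq] at hG; exact hnoedge t₀ hG
      · intro heq; rw [heq] at hs'; exact hs' (Sym2.mem_iff.mpr (Or.inl rfl))
      · intro heq'
        rw [heq'] at heq
        rcases Sym2.eq_iff.mp heq with ⟨-, hb⟩ | ⟨-, hb2⟩
        · exact huz hb.symm
        · exact hsz hb2.symm
    · rintro ⟨hvw, hne⟩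
      refine ⟨hvw, ?_⟩
      by_cases hmem : ∃ t₀, G.E s(v, w) t₀
      · obtain ⟨t₀, h⟩ := hmem
        exact ⟨t₀ + 1, Or.inl ⟨t₀, h, rfl⟩⟩
      · push_neg at hmem
        by_cases hsmem : s ∈ s(v, w)
        · rcases Sym2.mem_iff.mp hsmem with h | h
          · -- s = v
            subst h
            have hwz : w ≠ z := fun hc => hne (by rw [hc])
            exact ⟨G.tau + 2, Or.inr (Or.inr ⟨rfl, ⟨w, hwz, Ne.symm hvw, rfl⟩, hmem⟩)⟩
          · -- s = w
            subst h
            have hvz : v ≠ z := fun hc => hne (by rw [hc, Sym2.eq_swap])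
            refine ⟨G.tau + 2, Or.inr (Or.inr ⟨rfl, ⟨v, hvz, hvw, Sym2.eq_swap⟩, ?_⟩)⟩
            exact hmem
        · exact ⟨1, Or.inr (Or.inl ⟨rfl, by simp [Sym2.mk_isDiag_iff, hvw], hsmem, hmem⟩)⟩
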